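/- arXiv:gr-qc/0305062 — 2 statements merged into one kernel-verified Lean document; each statement's English description precedes it below -/
import Mathlib

section
/- Along any solution of the system ṙ = -(1/γ)rH, Ḣ = b·r² - H² with r > 0, the function I(r,H) = -(1/(2γ))·r^(−2γ)·(b·r²/(1 − 1/γ) − H²) is a first integral: its derivative along the flow vanishes, i.e. (∂I/∂r)·(-(1/γ)rH) + (∂I/∂H)·(b·r² − H²) = 0. -/
/-- `I(r,H) = -(1/(2γ)) r^(-2γ) (b r²/(1-1/γ) - H²)` is a first integral of
`ṙ = -(1/γ)rH`, `Ḣ = b r² - H²` on `{r > 0}`: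
its derivative along the flow vanishes. -/
theorem first_integral (γ b : ℝ) (hγ0 : γ ≠ 0) (hγ1 : γ ≠ 1)
    (hb : b = 1 ∨ b = -1)
    (I : ℝ → ℝ → ℝ)
    (hI : ∀ r H : ℝ, I r H =
      -(1 / (2 * γ)) * r ^ (-(2 : ℝ) * γ) * (b * r ^ 2 / (1 - 1 / γ) - H ^ 2))
    (r H : ℝ) (hr : 0 < r) :
    deriv (fun s => I s H) r * (-(1 / γ) * r * H) +
      deriv (fun K => I r K) H * (b * r ^ 2 - H ^ 2) = 0 := by
  have hrne : r ≠ 0 := hr.ne'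
  set p : ℝ := -(2 : ℝ) * γ with hp
  have h1 : HasDerivAt (fun s : ℝ => s ^ p) (p * r ^ (p - 1)) r :=
    Real.hasDerivAt_rpow_const (Or.inl hrne)
  have hA : HasDerivAt (fun s : ℝ => -(1 / (2 * γ)) * s ^ p)
      (-(1 / (2 * γ)) * (p * r ^ (p - 1))) r := h1.const_mul _
  have hB : HasDerivAt (fun s : ℝ => b * s ^ 2 / (1 - 1 / γ) - H ^ 2)
      (b * (2 * r) / (1 - 1 / γ)) r := by
    have := (((hasDerivAt_pow 2 r).const_mul b).div_const (1 - 1 / γ)).sub_const (H ^ 2)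
    simpa using this
  have hAB := hA.mul hB
  have hC : HasDerivAt (fun K : ℝ => -(1 / (2 * γ)) * r ^ p * (b * r ^ 2 / (1 - 1 / γ) - K ^ 2))
      (-(1 / (2 * γ)) * r ^ p * (-(2 * H))) H := by
    have h2 : HasDerivAt (fun K : ℝ => b * r ^ 2 / (1 - 1 / γ) - K ^ 2) (-(2 * H)) H := by
      have := (hasDerivAt_pow 2 H).const_sub (b * r ^ 2 / (1 - 1 / γ))
      simpa using this
    exact h2.const_mul _
  have hd1 : deriv (fun s => I s H) r =
      -(1 / (2 * γ)) * (p * r ^ (p - 1)) * (b * r ^ 2 / (1 - 1 / γ) - H ^ 2) +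
        -(1 / (2 * γ)) * r ^ p * (b * (2 * r) / (1 - 1 / γ)) := by
    simp only [hI]
    exact hAB.deriv
  have hd2 : deriv (fun K => I r K) H = -(1 / (2 * γ)) * r ^ p * (-(2 * H)) := by
    simp only [hI]
    exact hC.deriv
  rw [hd1, hd2]
  have hsub : r ^ (p - 1) = r ^ p / r := Real.rpow_sub_one hrne p
  rw [hsub]
  have hγ1' : γ - 1 ≠ 0 := sub_ne_zero.mpr hγ1
  have hd : (1 : ℝ) - 1 / γ ≠ 0 := by
    field_simp
    exact div_ne_zero hγ1' hγ0
  field_simp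
  ring
end

section
/- If (r(t), H(t)) is a solution of ṙ = -(3/2)rH, Ḣ = -r² - H² defined for all t ≥ 0 with r(0) > 0 and H(0) > √2·r(0), then (r(t), H(t)) → (0,0) as t → ∞. -/
open Set Filter Real

/-- Positivity is preserved for solutions of linear scalar ODEs `x' = a x`
with continuous coefficient, forward in time (by backward Gronwall). -/
lemma pos_of_linear_ode (x a : ℝ → ℝ)
    (hx : ∀ t ∈ Set.Ici (0:ℝ), HasDerivAt x (a t * x t) t)
    (ha : ContinuousOn a (Set.Ici 0)) (h0 : 0 < x 0) :
    ∀ t ∈ Set.Ici (0:ℝ), 0 < x t := by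
  intro t ht
  by_contra h
  push_neg at h
  have hcont : ContinuousOn x (Set.Icc 0 t) := fun s hs =>
    ((hx s hs.1).continuousAt).continuousWithinAt
  obtain ⟨c, hc, hxc⟩ : (0:ℝ) ∈ x '' Set.Icc 0 t :=
    intermediate_value_Icc' ht hcont ⟨h, h0.le⟩
  -- bound on |a| on [0, c]
  obtain ⟨K, hK⟩ := (isCompact_Icc (a := (0:ℝ)) (b := c)).exists_bound_of_continuousOn
    (ha.mono (Set.Icc_subset_Ici_self))
  have hc0 : 0 ≤ c := hc.1
  -- consider g s = x (c - s) on [0, c]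
  set g : ℝ → ℝ := fun s => x (c - s) with hg
  have hgderiv : ∀ s ∈ Set.Icc (0:ℝ) c,
      HasDerivAt g ((a (c - s) * x (c - s)) * (-1)) s := by
    intro s hs
    have hmem : c - s ∈ Set.Ici (0:ℝ) := by
      simp only [Set.mem_Ici]; linarith [hs.2]
    exact (hx (c - s) hmem).comp s (((hasDerivAt_id s).const_sub c))
  have hgc : ∀ s ∈ Set.Icc (0:ℝ) c, ‖g s‖ ≤ gronwallBound 0 K 0 (s - 0) := by
    apply norm_le_gronwallBound_of_norm_deriv_right_le
      (fun s hs => ((hgderiv s hs).continuousAt).continuousWithinAt)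
      (fun s hs => ((hgderiv s ⟨hs.1, hs.2.le⟩).hasDerivWithinAt))
      (by simp [hg, hxc])
    intro s hs
    have hmem : c - s ∈ Set.Icc (0:ℝ) c := ⟨by linarith [hs.2.le], by linarith [hs.1]⟩
    have hKs := hK _ hmem
    calc ‖(a (c - s) * x (c - s)) * (-1)‖ = ‖a (c - s)‖ * ‖x (c - s)‖ := by
          rw [norm_mul, norm_neg, norm_one, mul_one, norm_mul]
      _ ≤ K * ‖g s‖ + 0 := by
          rw [add_zero]
          exact mul_le_mul_of_nonneg_right hKs (norm_nonneg _)
  have := hgc c ⟨hc0, le_refl c⟩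
  rw [gronwallBound_ε0_δ0] at this
  simp only [hg, sub_self] at this
  have : x 0 = 0 := by
    have h' := norm_nonneg (x 0)
    have : ‖x 0‖ = 0 := le_antisymm this h'
    simpa using this
  linarith

/-- A global forward solution of `ṙ = -(3/2)rH`, `Ḣ = -r² - H²` starting with
`r(0) > 0` and `H(0) > √2 r(0)` converges to the origin as `t → ∞`. -/
theorem solution_tendsto_origin (r H : ℝ → ℝ)
    (hr : ∀ t ∈ Set.Ici (0 : ℝ), HasDerivAt r (-(3 / 2) * r t * H t) t)
    (hH : ∀ t ∈ Set.Ici (0 : ℝ), HasDerivAt H (-(r t) ^ 2 - (H t) ^ 2) t)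
    (hr0 : 0 < r 0) (hH0 : Real.sqrt 2 * r 0 < H 0) :
    Filter.Tendsto (fun t => (r t, H t)) Filter.atTop (nhds (0, 0)) := by
  have hs2 : (0:ℝ) < Real.sqrt 2 := by positivity
  have hs2sq : Real.sqrt 2 ^ 2 = 2 := Real.sq_sqrt (by norm_num)
  have hrcont : ContinuousOn r (Set.Ici 0) := fun s hs =>
    ((hr s hs).continuousAt).continuousWithinAt
  have hHcont : ContinuousOn H (Set.Ici 0) := fun s hs =>
    ((hH s hs).continuousAt).continuousWithinAt
  -- r stays positive
  have hrpos : ∀ t ∈ Set.Ici (0:ℝ), 0 < r t := by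
    apply pos_of_linear_ode r (fun t => -(3/2) * H t) _ _ hr0
    · intro t ht
      have := hr t ht
      convert this using 1; ring
    · exact continuousOn_const.mul hHcont
  -- u = H - √2 r stays positive
  have hupos : ∀ t ∈ Set.Ici (0:ℝ), 0 < H t - Real.sqrt 2 * r t := by
    have h2 : Real.sqrt 2 * Real.sqrt 2 = 2 := Real.mul_self_sqrt (by norm_num)
    apply pos_of_linear_ode (fun t => H t - Real.sqrt 2 * r t)
      (fun t => (Real.sqrt 2 / 2) * r t - H t) _ _ (by linarith)
    · intro t ht
      have h1 := (hH t ht).sub (((hr t ht)).const_mul (Real.sqrt 2))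
      exact h1.congr_deriv (by linear_combination (r t ^ 2 / 2) * hs2sq)
    · exact (continuousOn_const.mul hrcont).sub hHcont
  have hHpos : ∀ t ∈ Set.Ici (0:ℝ), 0 < H t := by
    intro t ht
    have := hupos t ht
    have := hrpos t ht
    nlinarith
  -- H is antitone on [0, ∞)
  have hHanti : AntitoneOn H (Set.Ici 0) := by
    apply antitoneOn_of_deriv_nonpos (convex_Ici 0) hHcont
    · intro s hs
      rw [interior_Ici] at hs
      exact ((hH s (Set.Ioi_subset_Ici_self hs)).differentiableAt).differentiableWithinAt
    · intro s hs
      rw [interior_Ici] at hs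
      rw [(hH s (Set.Ioi_subset_Ici_self hs)).deriv]
      nlinarith [sq_nonneg (r s), sq_nonneg (H s)]
  -- limit of H
  set Ht : ℝ → ℝ := fun t => H (max t 0) with hHt
  have hHtanti : Antitone Ht := fun s t hst =>
    hHanti (le_max_right s 0) (le_max_right t 0) (max_le_max hst le_rfl)
  have hHtpos : ∀ t, 0 < Ht t := fun t => hHpos _ (le_max_right t 0)
  have hbdd : BddBelow (Set.range Ht) := ⟨0, by rintro _ ⟨t, rfl⟩; exact (hHtpos t).le⟩
  set L : ℝ := ⨅ t, Ht t with hL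
  have hLtendsto : Filter.Tendsto Ht Filter.atTop (nhds L) := tendsto_atTop_ciInf hHtanti hbdd
  have hL0 : 0 ≤ L := le_ciInf fun t => (hHtpos t).le
  have hLle : ∀ t, L ≤ Ht t := fun t => ciInf_le hbdd t
  have hHtendsto : Filter.Tendsto H Filter.atTop (nhds L) := by
    apply hLtendsto.congr'
    filter_upwards [Filter.eventually_ge_atTop (0:ℝ)] with t ht
    simp [hHt, max_eq_left ht]
  -- L = 0
  have hLzero : L = 0 := by
    by_contra hne
    have hLpos : 0 < L := lt_of_le_of_ne hL0 (Ne.symm hne)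
    -- φ t = H t + L^2 t is antitone on Ici 0
    have hφ : AntitoneOn (fun t => H t + L^2 * t) (Set.Ici 0) := by
      apply antitoneOn_of_deriv_nonpos (convex_Ici 0)
      · exact hHcont.add ((continuous_const.mul continuous_id).continuousOn)
      · intro s hs
        rw [interior_Ici] at hs
        exact (((hH s (Set.Ioi_subset_Ici_self hs)).add
          ((hasDerivAt_id s).const_mul (L^2))).differentiableAt).differentiableWithinAt
      · intro s hs
        rw [interior_Ici] at hs
        have hd : HasDerivAt (fun t => H t + L^2 * t)
            ((-(r s)^2 - (H s)^2) + L^2 * 1) s :=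
          (hH s (Set.Ioi_subset_Ici_self hs)).add ((hasDerivAt_id s).const_mul (L^2))
        rw [hd.deriv]
        have hHs : L ≤ H s := by
          have := hLle s
          simpa [hHt, max_eq_left (le_of_lt (Set.mem_Ioi.1 hs))] using this
        nlinarith [sq_nonneg (r s)]
    set T : ℝ := (H 0 + 1) / L^2 with hT
    have hTpos : 0 < T := by
      apply div_pos _ (by positivity)
      linarith [hHpos 0 Set.self_mem_Ici]
    have := hφ (Set.self_mem_Ici) (Set.mem_Ici.2 hTpos.le) hTpos.le
    simp only [mul_zero, add_zero] at this
    have hLT : L^2 * T = H 0 + 1 := by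
      rw [hT]; field_simp
    have := hHpos T (Set.mem_Ici.2 hTpos.le)
    linarith
  rw [hLzero] at hHtendsto
  -- r → 0 by squeeze
  have hrtendsto : Filter.Tendsto r Filter.atTop (nhds 0) := by
    have hdiv : Filter.Tendsto (fun t => H t / Real.sqrt 2) Filter.atTop (nhds 0) := by
      simpa using hHtendsto.div_const (Real.sqrt 2)
    apply tendsto_of_tendsto_of_tendsto_of_le_of_le' tendsto_const_nhds hdiv
    · filter_upwards [Filter.eventually_ge_atTop (0:ℝ)] with t ht
      exact (hrpos t ht).le
    · filter_upwards [Filter.eventually_ge_atTop (0:ℝ)] with t ht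
      have := hupos t ht
      rw [le_div_iff₀ hs2]
      nlinarith
  exact hrtendsto.prodMk_nhds hHtendsto
end
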